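/- Suppose a group G acts strongly transitively on a thick spherical building Δ. Let Σ be an apartment of Δ containing a chamber c, let B be the stabilizer of c in G, and let T be the pointwise stabilizer of Σ in G. For each pair τ = (a, ā) of opposite panels of Σ, let B_τ be the subgroup of B fixing both a and ā. Then B is generated by T together with the subgroups B_τ, where τ ranges over all pairs of opposite panels in Σ. -/

import Mathlib

/-- A building in the `W`-metric (chamber system) sense: a type `C` of chambers with a
Weyl-distance function `δ : C → C → W` satisfying the standard axioms. -/
structure IsWBuilding {I W : Type*} [Group W] {M : CoxeterMatrix I}
    (cs : CoxeterSystem M W) {C : Type*} (δ : C → C → W) : Prop where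
  eq_one_iff : ∀ c d : C, δ c d = 1 ↔ c = d
  symm : ∀ c d : C, δ d c = (δ c d)⁻¹
  step : ∀ c d e : C, ∀ i : I, δ d e = cs.simple i →
    δ c e = δ c d * cs.simple i ∨ δ c e = δ c d
  step_len : ∀ c d e : C, ∀ i : I, δ d e = cs.simple i →
    cs.length (δ c d * cs.simple i) = cs.length (δ c d) + 1 →
    δ c e = δ c d * cs.simple i
  exists_step : ∀ c d : C, ∀ i : I, ∃ e : C, δ d e = cs.simple i ∧
    δ c e = δ c d * cs.simple i

/-- An apartment: the image of a `δ`-isometric copy of the Coxeter group `W`. -/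
def IsApartmentOf {I W : Type*} [Group W] {M : CoxeterMatrix I}
    (cs : CoxeterSystem M W) {C : Type*} (δ : C → C → W) (A : Set C) : Prop :=
  ∃ f : W → C, Function.Injective f ∧ Set.range f = A ∧
    ∀ u v : W, δ (f u) (f v) = u⁻¹ * v

/-- Thickness: every panel contains at least three chambers. -/
def IsThick {I W : Type*} [Group W] {M : CoxeterMatrix I}
    (cs : CoxeterSystem M W) {C : Type*} (δ : C → C → W) : Prop :=
  ∀ c : C, ∀ i : I, ∃ d e : C, δ c d = cs.simple i ∧ δ c e = cs.simple i ∧ d ≠ e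

/-- The panel of a chamber `c` in the direction of the generator `i`. -/
def panelOf {I W : Type*} [Group W] {M : CoxeterMatrix I}
    (cs : CoxeterSystem M W) {C : Type*} (δ : C → C → W) (c : C) (i : I) : Set C :=
  {d | δ c d = 1 ∨ δ c d = cs.simple i}

/-- `P` is a panel of the building. -/
def IsPanel {I W : Type*} [Group W] {M : CoxeterMatrix I}
    (cs : CoxeterSystem M W) {C : Type*} (δ : C → C → W) (P : Set C) : Prop :=
  ∃ c i, P = panelOf cs δ c i

/-- A pair of opposite panels of the apartment `A` (with respect to the longest
element `w₀`): both panels meet `A` and they contain opposite chambers of `A`. -/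
def OppPanelsIn {I W : Type*} [Group W] {M : CoxeterMatrix I}
    (cs : CoxeterSystem M W) {C : Type*} (δ : C → C → W) (w₀ : W)
    (A P Q : Set C) : Prop :=
  IsPanel cs δ P ∧ IsPanel cs δ Q ∧
    ∃ c ∈ P ∩ A, ∃ d ∈ Q ∩ A, δ c d = w₀

/-- A `G`-action by (type-preserving) automorphisms of the building. -/
def IsIsometricAction {I W : Type*} [Group W] {M : CoxeterMatrix I}
    (cs : CoxeterSystem M W) {C : Type*} (δ : C → C → W)
    (G : Type*) [Group G] [MulAction G C] : Prop :=
  ∀ g : G, ∀ c d : C, δ (g • c) (g • d) = δ c d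

/-- Strong transitivity: `G` is transitive on pairs (apartment, chamber in it). -/
def IsStronglyTransitive {I W : Type*} [Group W] {M : CoxeterMatrix I}
    (cs : CoxeterSystem M W) {C : Type*} (δ : C → C → W)
    (G : Type*) [Group G] [MulAction G C] : Prop :=
  ∀ A A' : Set C, IsApartmentOf cs δ A → IsApartmentOf cs δ A' →
    ∀ c ∈ A, ∀ c' ∈ A', ∃ g : G, (fun x => g • x) '' A = A' ∧ g • c = c'

namespace Stmt4Proof

open CoxeterSystem Multiplicative
open scoped Classical

/-! ### ZMod 2 helpers -/

lemma zmod2_cases (a : ZMod 2) : a = 0 ∨ a = 1 := by revert a; decide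

lemma zmod2_add_self (a : ZMod 2) : a + a = 0 := by revert a; decide

lemma zmod2_sum_eq_one_of_ne {a b : ZMod 2} (h : a ≠ b) : a + b = 1 := by revert a b; decide

lemma zmod2_aux1 (a : ZMod 2) : a + (1 + a) = 1 := by revert a; decide

/-! ### The conjugation action on `Multiplicative (W → ZMod 2)` -/

variable {W : Type*} [Group W]

/-- Conjugation of the argument, as a function on `Multiplicative (W → ZMod 2)`. -/
def conjFun (w : W) (F : Multiplicative (W → ZMod 2)) : Multiplicative (W → ZMod 2) :=
  Multiplicative.ofAdd fun x => Multiplicative.toAdd F (w⁻¹ * x * w)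

lemma conjFun_toAdd (w : W) (F : Multiplicative (W → ZMod 2)) (x : W) :
    Multiplicative.toAdd (conjFun w F) x = Multiplicative.toAdd F (w⁻¹ * x * w) := rfl

lemma conjFun_conjFun (u w : W) (F : Multiplicative (W → ZMod 2)) :
    conjFun u (conjFun w F) = conjFun (u * w) F := by
  unfold conjFun
  congr 1
  funext x
  simp only [toAdd_ofAdd]
  congr 1
  group

lemma conjFun_one (F : Multiplicative (W → ZMod 2)) : conjFun (1 : W) F = F := by
  unfold conjFun
  simp

/-- Conjugation as a `MulEquiv`. -/
def conjEquiv (w : W) : Multiplicative (W → ZMod 2) ≃* Multiplicative (W → ZMod 2) where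
  toFun := conjFun w
  invFun := conjFun w⁻¹
  left_inv F := by rw [conjFun_conjFun, inv_mul_cancel, conjFun_one]
  right_inv F := by rw [conjFun_conjFun, mul_inv_cancel, conjFun_one]
  map_mul' F G := rfl

/-- Conjugation as a homomorphism `W →* MulAut (Multiplicative (W → ZMod 2))`. -/
def conjAut : W →* MulAut (Multiplicative (W → ZMod 2)) where
  toFun := conjEquiv
  map_one' := by
    ext F : 1
    exact conjFun_one F
  map_mul' u v := by
    ext F : 1
    show conjFun (u * v) F = conjFun u (conjFun v F)
    rw [conjFun_conjFun]

lemma conjAut_apply (w : W) (F : Multiplicative (W → ZMod 2)) :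
    conjAut w F = conjFun w F := rfl


section sums

lemma sum_shift_one {A : Type*} [AddCommGroup A] (g : ℕ → A) (m : ℕ) (h : g m = g 0) :
    ∑ r ∈ Finset.range m, g (r + 1) = ∑ r ∈ Finset.range m, g r := by
  have h1 := Finset.sum_range_succ' g m
  have h2 := Finset.sum_range_succ g m
  rw [h2, h] at h1
  exact (add_right_cancel h1.symm)

lemma sum_shift {A : Type*} [AddCommGroup A] (g : ℕ → A) (m : ℕ)
    (hp : ∀ r, g (r + m) = g r) (k : ℕ) :
    ∑ r ∈ Finset.range m, g (r + k) = ∑ r ∈ Finset.range m, g r := by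
  induction k with
  | zero => simp
  | succ k ih =>
    have key := sum_shift_one (fun r => g (r + k)) m
      (by show g (m + k) = g (0 + k); rw [add_comm m k, hp k, zero_add])
    calc ∑ r ∈ Finset.range m, g (r + (k+1))
        = ∑ r ∈ Finset.range m, g (r + 1 + k) :=
          Finset.sum_congr rfl fun r _ => by congr 1; omega
      _ = ∑ r ∈ Finset.range m, g (r + k) := key
      _ = _ := ih

lemma sum_double_zero (g : ℕ → ZMod 2) (n : ℕ) (h : ∀ r, g (r + n) = g r) :
    ∑ r ∈ Finset.range (n + n), g r = 0 := by
  rw [Finset.sum_range_add]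
  have : ∀ r ∈ Finset.range n, g (n + r) = g r := by
    intro r _; rw [add_comm]; exact h r
  rw [Finset.sum_congr rfl this]
  exact zmod2_add_self _

end sums

section dihedral

variable {W : Type*} [Group W]

lemma dihedral_sum (a b : W) (m : ℕ) (ha : a * a = 1) (hb : b * b = 1)
    (hm : (a * b) ^ m = 1) (x : W) :
    ∑ r ∈ Finset.range m,
      ((if ((a*b)^r)⁻¹ * x * (a*b)^r = a then (1 : ZMod 2) else 0)
        + (if a * (((a*b)^r)⁻¹ * x * (a*b)^r) * a = b then (1 : ZMod 2) else 0)) = 0 := by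
  set ρ := a * b with hρ
  have hainv : a⁻¹ = a := inv_eq_of_mul_eq_one_right ha
  have hbinv : b⁻¹ = b := inv_eq_of_mul_eq_one_right hb
  set C : ℕ → W := fun r => ρ ^ r * a * (ρ ^ r)⁻¹ with hC
  set D : ℕ → W := fun r => ρ ^ r * b * (ρ ^ r)⁻¹ with hD
  have hc1 : ∀ r, ((if ((ρ)^r)⁻¹ * x * (ρ)^r = a then (1 : ZMod 2) else 0))
      = (if x = C r then 1 else 0) := by
    intro r
    apply if_congr _ rfl rfl
    constructor
    · intro h; rw [hC]; simp only [← h]; group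
    · intro h; rw [h, hC]; group
  have hρbρ : ρ * b * ρ⁻¹ = a * b * a := by
    rw [hρ, mul_inv_rev]
    calc a * b * b * (b⁻¹ * a⁻¹) = a * b * a⁻¹ := by group
      _ = a * b * a := by rw [hainv]
  have hc2 : ∀ r, ((if a * (((ρ)^r)⁻¹ * x * (ρ)^r) * a = b then (1 : ZMod 2) else 0))
      = (if x = D (r+1) then 1 else 0) := by
    intro r
    apply if_congr _ rfl rfl
    have hDr : D (r + 1) = ρ ^ r * (a * b * a) * (ρ ^ r)⁻¹ := by
      rw [hD]
      simp only [pow_succ]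
      rw [← hρbρ]
      group
    constructor
    · intro h
      have hx : x = ρ ^ r * (a⁻¹ * b * a⁻¹) * (ρ ^ r)⁻¹ := by
        simp only [← h]; group
      rw [hx, hDr, hainv]
    · intro h
      rw [h, hDr]
      calc a * ((ρ ^ r)⁻¹ * (ρ ^ r * (a * b * a) * (ρ ^ r)⁻¹) * ρ ^ r) * a
          = (a * a) * b * (a * a) := by group
        _ = b := by rw [ha]; group
  simp only [hc1, hc2]
  have hDper : ∀ r, D (r + m) = D r := by
    intro r; rw [hD]; simp only [pow_add, hm, mul_one]
  have hCper : ∀ r, C (r + m) = C r := by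
    intro r; rw [hC]; simp only [pow_add, hm, mul_one]
  rw [Finset.sum_add_distrib]
  have hshift : ∑ r ∈ Finset.range m, (if x = D (r + 1) then (1 : ZMod 2) else 0)
      = ∑ r ∈ Finset.range m, (if x = D r then (1 : ZMod 2) else 0) :=
    sum_shift (fun r => if x = D r then (1:ZMod 2) else 0) m
      (fun r => by show (if x = D (r+m) then (1:ZMod 2) else 0) = _; rw [hDper]) 1
  rw [hshift]
  have haρa : ∀ k : ℕ, a * ρ ^ k * a = (ρ ^ k)⁻¹ := by
    intro k
    have h1 : a * ρ * a⁻¹ = ρ⁻¹ := by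
      rw [hρ, mul_inv_rev, hainv, hbinv]
      calc a * (a * b) * a = (a * a) * (b * a) := by group
        _ = b * a := by rw [ha, one_mul]
    calc a * ρ ^ k * a = a * ρ ^ k * a⁻¹ := by rw [hainv]
      _ = (a * ρ * a⁻¹) ^ k := (conj_pow).symm
      _ = (ρ⁻¹) ^ k := by rw [h1]
      _ = (ρ ^ k)⁻¹ := inv_pow ρ k
  have hbρb : ∀ k : ℕ, b * ρ ^ k * b = (ρ ^ k)⁻¹ := by
    intro k
    have h1 : b * ρ * b⁻¹ = ρ⁻¹ := by
      rw [hρ, mul_inv_rev, hainv, hbinv]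
      calc b * (a * b) * b = (b * a) * (b * b) := by group
        _ = b * a := by rw [hb, mul_one]
    calc b * ρ ^ k * b = b * ρ ^ k * b⁻¹ := by rw [hbinv]
      _ = (b * ρ * b⁻¹) ^ k := (conj_pow).symm
      _ = (ρ⁻¹) ^ k := by rw [h1]
      _ = (ρ ^ k)⁻¹ := inv_pow ρ k
  rcases Nat.even_or_odd m with ⟨n, hn⟩ | ⟨n, hn⟩
  · subst hn
    have hρn : ρ ^ n * a = a * ρ ^ n := by
      have h2 : a * ρ ^ n * a = (ρ ^ n)⁻¹ := haρa n
      have h3 : (ρ ^ n)⁻¹ = ρ ^ n := by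
        rw [inv_eq_iff_mul_eq_one, ← pow_add]; exact hm
      rw [h3] at h2
      calc ρ ^ n * a = (a * a) * ρ ^ n * a := by rw [ha, one_mul]
        _ = a * (a * ρ ^ n * a) := by group
        _ = a * ρ ^ n := by rw [h2]
    have hρnb : ρ ^ n * b = b * ρ ^ n := by
      have h2 : b * ρ ^ n * b = (ρ ^ n)⁻¹ := hbρb n
      have h3 : (ρ ^ n)⁻¹ = ρ ^ n := by
        rw [inv_eq_iff_mul_eq_one, ← pow_add]; exact hm
      rw [h3] at h2
      calc ρ ^ n * b = (b * b) * ρ ^ n * b := by rw [hb, one_mul]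
        _ = b * (b * ρ ^ n * b) := by group
        _ = b * ρ ^ n := by rw [h2]
    have hCn : ∀ r, C (r + n) = C r := by
      intro r
      show ρ ^ (r + n) * a * (ρ ^ (r + n))⁻¹ = ρ ^ r * a * (ρ ^ r)⁻¹
      rw [pow_add, mul_inv_rev]
      calc ρ ^ r * ρ ^ n * a * ((ρ ^ n)⁻¹ * (ρ ^ r)⁻¹)
          = ρ ^ r * (ρ ^ n * a) * (ρ ^ n)⁻¹ * (ρ ^ r)⁻¹ := by group
        _ = ρ ^ r * (a * ρ ^ n) * (ρ ^ n)⁻¹ * (ρ ^ r)⁻¹ := by rw [hρn]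
        _ = ρ ^ r * a * (ρ ^ r)⁻¹ := by group
    have hDn : ∀ r, D (r + n) = D r := by
      intro r
      show ρ ^ (r + n) * b * (ρ ^ (r + n))⁻¹ = ρ ^ r * b * (ρ ^ r)⁻¹
      rw [pow_add, mul_inv_rev]
      calc ρ ^ r * ρ ^ n * b * ((ρ ^ n)⁻¹ * (ρ ^ r)⁻¹)
          = ρ ^ r * (ρ ^ n * b) * (ρ ^ n)⁻¹ * (ρ ^ r)⁻¹ := by group
        _ = ρ ^ r * (b * ρ ^ n) * (ρ ^ n)⁻¹ * (ρ ^ r)⁻¹ := by rw [hρnb]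
        _ = ρ ^ r * b * (ρ ^ r)⁻¹ := by group
    rw [sum_double_zero (fun r => if x = C r then (1:ZMod 2) else 0) n
          (fun r => by show (if x = C (r+n) then (1:ZMod 2) else 0) = _; rw [hCn]),
        sum_double_zero (fun r => if x = D r then (1:ZMod 2) else 0) n
          (fun r => by show (if x = D (r+n) then (1:ZMod 2) else 0) = _; rw [hDn]),
        add_zero]
  · have key : ρ ^ (n+1) * b * (ρ ^ (n+1))⁻¹ = a := by
      have h2 : b * (ρ ^ (n+1))⁻¹ * b = ρ ^ (n+1) := by
        have h3 := hbρb (n+1)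
        calc b * (ρ ^ (n+1))⁻¹ * b = (b * ρ ^ (n+1) * b)⁻¹ := by
              rw [mul_inv_rev, mul_inv_rev, hbinv]; group
          _ = ((ρ ^ (n+1))⁻¹)⁻¹ := by rw [h3]
          _ = ρ ^ (n+1) := inv_inv _
      have hb' : b * (ρ ^ (n+1))⁻¹ = ρ ^ (n+1) * b := by
        calc b * (ρ ^ (n+1))⁻¹ = (b * (ρ ^ (n+1))⁻¹ * b) * b⁻¹ := by group
          _ = ρ ^ (n+1) * b⁻¹ := by rw [h2]
          _ = ρ ^ (n+1) * b := by rw [hbinv]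
      calc ρ ^ (n+1) * b * (ρ ^ (n+1))⁻¹ = ρ ^ (n+1) * (b * (ρ ^ (n+1))⁻¹) := by group
        _ = ρ ^ (n+1) * (ρ ^ (n+1) * b) := by rw [hb']
        _ = ρ ^ (m + 1) * b := by rw [← mul_assoc, ← pow_add]; congr 2; omega
        _ = ρ * b := by rw [pow_succ, hm, one_mul]
        _ = a := by rw [hρ, mul_assoc, hb, mul_one]
    have hCD : ∀ r, C r = D (r + (n + 1)) := by
      intro r
      show ρ ^ r * a * (ρ ^ r)⁻¹ = ρ ^ (r + (n+1)) * b * (ρ ^ (r + (n+1)))⁻¹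
      rw [pow_add, mul_inv_rev]
      calc ρ ^ r * a * (ρ ^ r)⁻¹
          = ρ ^ r * (ρ ^ (n+1) * b * (ρ ^ (n+1))⁻¹) * (ρ ^ r)⁻¹ := by rw [key]
        _ = ρ ^ r * ρ ^ (n+1) * b * ((ρ ^ (n+1))⁻¹ * (ρ ^ r)⁻¹) := by group
    have heq : ∑ r ∈ Finset.range m, (if x = C r then (1:ZMod 2) else 0)
        = ∑ r ∈ Finset.range m, (if x = D r then (1:ZMod 2) else 0) := by
      calc ∑ r ∈ Finset.range m, (if x = C r then (1:ZMod 2) else 0)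
          = ∑ r ∈ Finset.range m, (if x = D (r + (n+1)) then (1:ZMod 2) else 0) := by
            apply Finset.sum_congr rfl; intro r _; rw [hCD]
        _ = ∑ r ∈ Finset.range m, (if x = D r then (1:ZMod 2) else 0) :=
            sum_shift (fun r => if x = D r then (1:ZMod 2) else 0) m
              (fun r => by show (if x = D (r+m) then (1:ZMod 2) else 0) = _; rw [hDper]) (n+1)
    rw [heq]
    exact zmod2_add_self _

end dihedral
section cocycle

variable {I W : Type*} [Group W] {M : CoxeterMatrix I} (cs : CoxeterSystem M W)

/-- The basic generator images in the semidirect product. -/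
noncomputable def sigmaSD (i : I) : Multiplicative (W → ZMod 2) ⋊[conjAut] W :=
  ⟨Multiplicative.ofAdd fun x => if x = cs.simple i then 1 else 0, cs.simple i⟩

lemma sd_pow_right {N G : Type*} [Group N] [Group G] {φ : G →* MulAut N}
    (p : N ⋊[φ] G) (n : ℕ) : (p ^ n).right = p.right ^ n := by
  induction n with
  | zero => simp
  | succ n ih => rw [pow_succ, pow_succ, SemidirectProduct.mul_right, ih]

lemma sd_pow_left {N G : Type*} [CommGroup N] [Group G] {φ : G →* MulAut N}
    (p : N ⋊[φ] G) (n : ℕ) :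
    (p ^ n).left = ∏ r ∈ Finset.range n, φ (p.right ^ r) p.left := by
  induction n with
  | zero => simp
  | succ n ih =>
    rw [pow_succ, SemidirectProduct.mul_left, ih, sd_pow_right, Finset.prod_range_succ]

lemma sigma_liftable : M.IsLiftable (sigmaSD cs) := by
  intro i j
  apply SemidirectProduct.ext
  · -- left component
    rw [sd_pow_left, SemidirectProduct.one_left]
    have hright : (sigmaSD cs i * sigmaSD cs j).right = cs.simple i * cs.simple j := rfl
    apply Multiplicative.toAdd.injective
    funext x
    have expand : ∀ r : ℕ,
        Multiplicative.toAdd ((conjAut (((sigmaSD cs i * sigmaSD cs j).right) ^ r))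
          ((sigmaSD cs i * sigmaSD cs j).left)) x
        = (if ((cs.simple i * cs.simple j)^r)⁻¹ * x * (cs.simple i * cs.simple j)^r
              = cs.simple i then (1 : ZMod 2) else 0)
          + (if cs.simple i * (((cs.simple i * cs.simple j)^r)⁻¹ * x *
              (cs.simple i * cs.simple j)^r) * cs.simple i = cs.simple j
              then (1 : ZMod 2) else 0) := by
      intro r
      rw [hright]
      show Multiplicative.toAdd ((sigmaSD cs i * sigmaSD cs j).left)
            (((cs.simple i * cs.simple j)^r)⁻¹ * x * (cs.simple i * cs.simple j)^r) = _
      set y := ((cs.simple i * cs.simple j)^r)⁻¹ * x * (cs.simple i * cs.simple j)^r with hy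
      show Multiplicative.toAdd ((sigmaSD cs i).left *
          (conjAut ((sigmaSD cs i).right) (sigmaSD cs j).left)) y = _
      have : Multiplicative.toAdd ((sigmaSD cs i).left *
          (conjAut ((sigmaSD cs i).right) (sigmaSD cs j).left)) y
          = (if y = cs.simple i then (1:ZMod 2) else 0)
            + (if (cs.simple i)⁻¹ * y * cs.simple i = cs.simple j then (1:ZMod 2) else 0) := rfl
      rw [this, cs.inv_simple]
    calc Multiplicative.toAdd
          (∏ r ∈ Finset.range (M i j),
            (conjAut (((sigmaSD cs i * sigmaSD cs j).right) ^ r))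
              ((sigmaSD cs i * sigmaSD cs j).left)) x
        = ∑ r ∈ Finset.range (M i j),
            Multiplicative.toAdd ((conjAut (((sigmaSD cs i * sigmaSD cs j).right) ^ r))
              ((sigmaSD cs i * sigmaSD cs j).left)) x := by
          rw [toAdd_prod]
          exact Finset.sum_apply _ _ _
      _ = ∑ r ∈ Finset.range (M i j),
            ((if ((cs.simple i * cs.simple j)^r)⁻¹ * x * (cs.simple i * cs.simple j)^r
                = cs.simple i then (1 : ZMod 2) else 0)
              + (if cs.simple i * (((cs.simple i * cs.simple j)^r)⁻¹ * x *
                  (cs.simple i * cs.simple j)^r) * cs.simple i = cs.simple j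
                  then (1 : ZMod 2) else 0)) :=
          Finset.sum_congr rfl fun r _ => expand r
      _ = 0 := dihedral_sum (cs.simple i) (cs.simple j) (M i j)
          (cs.simple_mul_simple_self i) (cs.simple_mul_simple_self j)
          (cs.simple_mul_simple_pow i j) x
      _ = Multiplicative.toAdd (1 : Multiplicative (W → ZMod 2)) x := rfl
  · rw [sd_pow_right, SemidirectProduct.one_right]
    show (cs.simple i * cs.simple j) ^ (M i j) = 1
    exact cs.simple_mul_simple_pow i j

end cocycle
section cinv

variable {I W : Type*} [Group W] {M : CoxeterMatrix I} (cs : CoxeterSystem M W)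

/-- The lifted cocycle homomorphism. -/
noncomputable def PhiSD : W →* Multiplicative (W → ZMod 2) ⋊[conjAut] W :=
  cs.lift ⟨sigmaSD cs, sigma_liftable cs⟩

lemma PhiSD_right (w : W) : (PhiSD cs w).right = w := by
  have h : (SemidirectProduct.rightHom.comp (PhiSD cs)) = MonoidHom.id W := by
    apply cs.ext_simple
    intro i
    show SemidirectProduct.rightHom (PhiSD cs (cs.simple i)) = cs.simple i
    rw [PhiSD, cs.lift_apply_simple]
    rfl
  exact DFunLike.congr_fun h w

/-- The inversion-parity cocycle. -/
noncomputable def cinv (w x : W) : ZMod 2 := Multiplicative.toAdd ((PhiSD cs w).left) x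

lemma c_one (x : W) : cinv cs 1 x = 0 := by
  unfold cinv
  rw [map_one]
  rfl

lemma c_simple (i : I) (x : W) :
    cinv cs (cs.simple i) x = if x = cs.simple i then 1 else 0 := by
  unfold cinv
  rw [PhiSD, cs.lift_apply_simple]
  rfl

lemma c_mul (u v x : W) :
    cinv cs (u * v) x = cinv cs u x + cinv cs v (u⁻¹ * x * u) := by
  unfold cinv
  rw [map_mul, SemidirectProduct.mul_left, PhiSD_right]
  rfl

lemma zmod2_add_eq_zero {a b : ZMod 2} (h : a + b = 0) : b = a := by revert a b; decide

lemma c_inv (w x : W) : cinv cs w⁻¹ x = cinv cs w (w * x * w⁻¹) := by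
  have h0 := c_mul cs w w⁻¹ (w * x * w⁻¹)
  rw [mul_inv_cancel, c_one] at h0
  have e : w⁻¹ * (w * x * w⁻¹) * w = x := by group
  rw [e] at h0
  exact zmod2_add_eq_zero h0.symm

lemma c_lt_aux (n : ℕ) : ∀ w t : W, cs.length w ≤ n → cinv cs w t = 1 →
    cs.length (t * w) < cs.length w := by
  induction n with
  | zero =>
    intro w t hlen hc
    have hw : w = 1 := cs.length_eq_zero_iff.mp (Nat.le_zero.mp hlen)
    rw [hw, c_one] at hc
    exact absurd hc (by decide)
  | succ n ih =>
    intro w t hlen hc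
    by_cases hw : w = 1
    · rw [hw, c_one] at hc
      exact absurd hc (by decide)
    obtain ⟨i, hdes⟩ := cs.exists_leftDescent_of_ne_one hw
    have hdes' : cs.length (cs.simple i * w) < cs.length w := hdes
    set w' := cs.simple i * w with hw'
    have hcomb : cs.simple i * w' = w := cs.simple_mul_simple_cancel_left i
    by_cases ht : t = cs.simple i
    · rw [ht]; exact hdes'
    · have hsplit := c_mul cs (cs.simple i) w' t
      rw [hcomb] at hsplit
      rw [c_simple, if_neg ht, zero_add, cs.inv_simple] at hsplit
      have hc' : cinv cs w' (cs.simple i * t * cs.simple i) = 1 := by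
        rw [← hsplit]; exact hc
      have hlen' : cs.length w' ≤ n := by omega
      have hIH := ih w' (cs.simple i * t * cs.simple i) hlen' hc'
      have hss := cs.simple_mul_simple_self i
      have e : cs.simple i * ((cs.simple i * t * cs.simple i) * w') = t * w := by
        rw [hw']
        calc cs.simple i * (cs.simple i * t * cs.simple i * (cs.simple i * w))
            = (cs.simple i * cs.simple i) * t * (cs.simple i * cs.simple i) * w := by group
          _ = t * w := by rw [hss]; group
      have hb : cs.length (t * w) ≤ 1 + cs.length ((cs.simple i * t * cs.simple i) * w') := by
        rw [← e]
        have := cs.length_mul_le (cs.simple i) ((cs.simple i * t * cs.simple i) * w')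
        rw [cs.length_simple] at this
        omega
      omega

lemma c_self {t : W} (ht : cs.IsReflection t) : cinv cs t t = 1 := by
  obtain ⟨u, i, rfl⟩ := ht
  set t := u * cs.simple i * u⁻¹ with hts
  have e1 : u * (cs.simple i * u⁻¹) = t := by rw [hts]; group
  have h1 := c_mul cs u (cs.simple i * u⁻¹) t
  rw [e1] at h1
  have e2 : u⁻¹ * t * u = cs.simple i := by rw [hts]; group
  rw [e2] at h1
  have h2 := c_mul cs (cs.simple i) u⁻¹ (cs.simple i)
  have e3 : (cs.simple i)⁻¹ * cs.simple i * cs.simple i = cs.simple i := by group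
  rw [e3, c_simple, if_pos rfl] at h2
  have h3 := c_inv cs u (cs.simple i)
  have e4 : u * cs.simple i * u⁻¹ = t := hts.symm
  rw [e4] at h3
  rw [h3] at h2
  rw [h2] at h1
  rw [h1]
  exact zmod2_aux1 _

lemma c_iff {t : W} (ht : cs.IsReflection t) (w : W) :
    cinv cs w t = 1 ↔ cs.length (t * w) < cs.length w := by
  constructor
  · exact fun h => c_lt_aux cs (cs.length w) w t le_rfl h
  · intro hlt
    rcases zmod2_cases (cinv cs w t) with h0 | h1
    · exfalso
      have h2 := c_mul cs t w t
      have e : t⁻¹ * t * t = t := by group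
      rw [e, h0, add_zero, c_self cs ht] at h2
      have h3 := c_lt_aux cs (cs.length (t * w)) (t * w) t le_rfl h2
      have e2 : t * (t * w) = w := by rw [← mul_assoc, ht.mul_self, one_mul]
      rw [e2] at h3
      omega
    · exact h1

/-- Wall-crossing / separation criterion. -/
lemma sep_iff (v w : W) (i : I) :
    cs.length ((w⁻¹ * v) * cs.simple i) < cs.length (w⁻¹ * v) ↔
      cinv cs w (v * cs.simple i * v⁻¹) + cinv cs v (v * cs.simple i * v⁻¹) = 1 := by
  set t := v * cs.simple i * v⁻¹ with hts
  set r := w⁻¹ * t * w with hrs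
  have hrrefl : cs.IsReflection r := by
    have h1 : cs.IsReflection t := (cs.isReflection_simple i).conj v
    have := h1.conj w⁻¹
    rw [inv_inv] at this
    exact this
  have e : (w⁻¹ * v) * cs.simple i = r * (w⁻¹ * v) := by rw [hrs, hts]; group
  rw [e, ← c_iff cs hrrefl (w⁻¹ * v)]
  have h2 := c_mul cs w⁻¹ v r
  have e2 : (w⁻¹)⁻¹ * r * w⁻¹ = t := by rw [hrs]; group
  rw [e2] at h2
  have h3 := c_inv cs w r
  have e3 : w * r * w⁻¹ = t := by rw [hrs]; group
  rw [e3] at h3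
  rw [h2, h3]

end cinv

section longest

variable {I W : Type*} [Group W] {M : CoxeterMatrix I} (cs : CoxeterSystem M W)
variable {w₀ : W} (hw₀ : ∀ w : W, cs.length w ≤ cs.length w₀)

include hw₀

lemma c_w0 {t : W} (ht : cs.IsReflection t) : cinv cs w₀ t = 1 := by
  rw [c_iff cs ht]
  have h1 := ht.length_mul_right_ne w₀
  have h2 := hw₀ (t * w₀)
  omega

/-- Length complementation with respect to the longest element. -/
lemma length_compl : ∀ v : W, cs.length v + cs.length (v⁻¹ * w₀) = cs.length w₀ := by
  suffices h : ∀ (n : ℕ) (v : W), cs.length v ≤ n →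
      cs.length v + cs.length (v⁻¹ * w₀) = cs.length w₀ by
    exact fun v => h (cs.length v) v le_rfl
  intro n
  induction n with
  | zero =>
    intro v hv
    have : v = 1 := cs.length_eq_zero_iff.mp (Nat.le_zero.mp hv)
    subst this
    simp
  | succ n ih =>
    intro v hv
    by_cases hv1 : v = 1
    · subst hv1; simp
    obtain ⟨i, hdes⟩ := cs.exists_rightDescent_of_ne_one hv1
    have hdes' : cs.length (v * cs.simple i) < cs.length v := hdes
    set v' := v * cs.simple i with hv's
    have hv'v : v' * cs.simple i = v := by rw [hv's]; exact cs.simple_mul_simple_cancel_right i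
    have hlenv' : cs.length v' + 1 = cs.length v := by
      rcases cs.length_mul_simple v i with h | h <;> rw [← hv's] at h <;> omega
    have hIH := ih v' (by omega)
    set z := v'⁻¹ * w₀ with hzs
    -- compute cinv z (s i) = 1
    set t' := v' * cs.simple i * v'⁻¹ with ht's
    have ht'refl : cs.IsReflection t' := (cs.isReflection_simple i).conj v'
    have hcz : cinv cs z (cs.simple i) = 1 := by
      have h2 := c_mul cs v'⁻¹ w₀ (cs.simple i)
      have e2 : (v'⁻¹)⁻¹ * cs.simple i * v'⁻¹ = t' := by rw [ht's]; group
      rw [e2] at h2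
      have h3 := c_inv cs v' (cs.simple i)
      have e3 : v' * cs.simple i * v'⁻¹ = t' := ht's.symm
      rw [e3] at h3
      have h4 : cinv cs v' t' = 0 := by
        rcases zmod2_cases (cinv cs v' t') with h | h
        · exact h
        · exfalso
          have h5 := (c_iff cs ht'refl v').mp h
          have e5 : t' * v' = v := by rw [ht's, ← hv'v]; group
          rw [e5] at h5
          omega
      rw [← hzs, h3, h4, c_w0 cs hw₀ ht'refl] at h2
      rw [h2, zero_add]
    have hlt : cs.length (cs.simple i * z) < cs.length z := by
      have := (c_iff cs (cs.isReflection_simple i) z).mp hcz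
      exact this
    have hlenz : cs.length (cs.simple i * z) + 1 = cs.length z := by
      rcases cs.length_simple_mul z i with h | h
      · omega
      · omega
    have e6 : v⁻¹ * w₀ = cs.simple i * z := by
      rw [hzs, ← hv'v]
      rw [mul_inv_rev, cs.inv_simple, mul_assoc]
    rw [e6]
    omega

lemma w0_mul_self : w₀ * w₀ = 1 := by
  have h := length_compl cs hw₀ w₀⁻¹
  rw [inv_inv, cs.length_inv] at h
  have h2 : cs.length (w₀ * w₀) = 0 := by omega
  exact cs.length_eq_zero_iff.mp h2

lemma w0_inv : w₀⁻¹ = w₀ := inv_eq_of_mul_eq_one_right (w0_mul_self cs hw₀)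

lemma length_compl' (v : W) : cs.length (v * w₀) = cs.length w₀ - cs.length v := by
  have h := length_compl cs hw₀ v⁻¹
  rw [inv_inv, cs.length_inv] at h
  omega

lemma length_w0_mul (v : W) : cs.length (w₀ * v) = cs.length w₀ - cs.length v := by
  have : w₀ * v = ((v⁻¹) * w₀)⁻¹ := by rw [mul_inv_rev, inv_inv, w0_inv cs hw₀]
  rw [this, cs.length_inv]
  have h := length_compl cs hw₀ v
  omega

lemma length_smul_w0 (i : I) : cs.length (cs.simple i * w₀) + 1 = cs.length w₀ := by
  have h := length_compl cs hw₀ (cs.simple i)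
  rw [cs.inv_simple, cs.length_simple] at h
  omega

lemma exists_istar (i : I) : ∃ i' : I, w₀ * cs.simple i * w₀ = cs.simple i' := by
  have h1 : cs.length (w₀ * cs.simple i * w₀) = 1 := by
    rw [mul_assoc, length_w0_mul cs hw₀]
    have h2 := length_smul_w0 cs hw₀ i
    have h3 : cs.length (cs.simple i * w₀) = cs.length w₀ - 1 := by omega
    have h4 : 1 ≤ cs.length w₀ := by
      have := cs.length_simple i
      have := hw₀ (cs.simple i)
      omega
    omega
  obtain ⟨i', hi'⟩ := cs.length_eq_one_iff.mp h1
  exact ⟨i', hi'⟩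

end longest

section building

variable {I W Ch : Type*} [Group W] {M : CoxeterMatrix I} {cs : CoxeterSystem M W}
variable {δ : Ch → Ch → W} (hbld : IsWBuilding cs δ)

include hbld

lemma delta_self (c : Ch) : δ c c = 1 := (hbld.eq_one_iff c c).mpr rfl

lemma delta_triangle_aux : ∀ (n : ℕ) (a b c : Ch), cs.length (δ b c) ≤ n →
    cs.length (δ a c) ≤ cs.length (δ a b) + cs.length (δ b c) := by
  intro n
  induction n with
  | zero =>
    intro a b c hlen
    have h1 : δ b c = 1 := cs.length_eq_zero_iff.mp (Nat.le_zero.mp hlen)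
    have h2 : b = c := (hbld.eq_one_iff b c).mp h1
    subst h2
    omega
  | succ n ih =>
    intro a b c hlen
    by_cases hbc : δ b c = 1
    · have h2 : b = c := (hbld.eq_one_iff b c).mp hbc
      subst h2
      omega
    · obtain ⟨i, hdes⟩ := cs.exists_rightDescent_of_ne_one hbc
      have hdes' : cs.length (δ b c * cs.simple i) < cs.length (δ b c) := hdes
      obtain ⟨e, he1, he2⟩ := hbld.exists_step b c i
      have hlen2 : cs.length (δ b c * cs.simple i) + 1 = cs.length (δ b c) := by
        rcases cs.length_mul_simple (δ b c) i with h | h <;> omega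
      have hbe : cs.length (δ b e) ≤ n := by rw [he2]; omega
      have hae := ih a b e hbe
      have hec : δ e c = cs.simple i := by
        rw [hbld.symm c e, he1, cs.inv_simple]
      rcases hbld.step a e c i hec with h | h
      · have := cs.length_mul_le (δ a e) (cs.simple i)
        rw [cs.length_simple] at this
        rw [h, he2] at *
        omega
      · rw [h, he2] at *
        omega

lemma delta_triangle (a b c : Ch) :
    cs.length (δ a c) ≤ cs.length (δ a b) + cs.length (δ b c) :=
  delta_triangle_aux hbld (cs.length (δ b c)) a b c le_rfl

lemma delta_mul_of_add_aux : ∀ (n : ℕ) (p x q : Ch), cs.length (δ x q) ≤ n →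
    cs.length (δ p x) + cs.length (δ x q) = cs.length (δ p q) →
    δ p q = δ p x * δ x q := by
  intro n
  induction n with
  | zero =>
    intro p x q hlen hadd
    have h1 : δ x q = 1 := cs.length_eq_zero_iff.mp (Nat.le_zero.mp hlen)
    have h2 : x = q := (hbld.eq_one_iff x q).mp h1
    subst h2
    rw [delta_self hbld, mul_one]
  | succ n ih =>
    intro p x q hlen hadd
    by_cases hxq : δ x q = 1
    · have h2 : x = q := (hbld.eq_one_iff x q).mp hxq
      subst h2
      rw [delta_self hbld, mul_one]
    · obtain ⟨i, hdes⟩ := cs.exists_leftDescent_of_ne_one hxq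
      have hdes' : cs.length (cs.simple i * δ x q) < cs.length (δ x q) := hdes
      have hlen2 : cs.length (cs.simple i * δ x q) + 1 = cs.length (δ x q) := by
        rcases cs.length_simple_mul (δ x q) i with h | h <;> omega
      obtain ⟨e, he1, he2⟩ := hbld.exists_step q x i
      -- he1 : δ x e = s i, he2 : δ q e = δ q x * s i
      have heq : δ e q = cs.simple i * δ x q := by
        rw [hbld.symm q e, he2, hbld.symm x q]
        rw [mul_inv_rev, cs.inv_simple, inv_inv]
      -- determine δ p e
      have hple : cs.length (δ p q) ≤ cs.length (δ p e) + cs.length (δ e q) :=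
        delta_triangle hbld p e q
      rcases hbld.step p x e i he1 with h | h
      · -- δ p e = δ p x * s i
        rw [h, heq] at hple
        have hub := cs.length_mul_le (δ p x) (cs.simple i)
        rw [cs.length_simple] at hub
        have hlen3 : cs.length (δ p x * cs.simple i) = cs.length (δ p x) + 1 := by omega
        have hIH := ih p e q (by rw [heq]; omega) (by rw [heq, h, hlen3]; omega)
        rw [hIH, h, heq]
        rw [mul_assoc, cs.simple_mul_simple_cancel_left]
      · exfalso
        rw [h, heq] at hple
        omega

lemma delta_mul_of_add (p x q : Ch)
    (hadd : cs.length (δ p x) + cs.length (δ x q) = cs.length (δ p q)) :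
    δ p q = δ p x * δ x q :=
  delta_mul_of_add_aux hbld (cs.length (δ x q)) p x q le_rfl hadd

lemma delta_unique_aux : ∀ (n : ℕ) (β γ : W) (p q x x' : Ch), cs.length β ≤ n →
    cs.length β + cs.length γ = cs.length (β * γ) → δ p q = β * γ →
    δ p x = β → δ x q = γ → δ p x' = β → δ x' q = γ → x = x' := by
  intro n
  induction n with
  | zero =>
    intro β γ p q x x' hn _ _ h1 _ h3 _
    have hβ : β = 1 := cs.length_eq_zero_iff.mp (Nat.le_zero.mp hn)
    subst hβ
    have e1 : p = x := (hbld.eq_one_iff p x).mp h1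
    have e2 : p = x' := (hbld.eq_one_iff p x').mp h3
    rw [← e1, ← e2]
  | succ n ih =>
    intro β γ p q x x' hn hadd hpq h1 h2 h3 h4
    by_cases hβ1 : β = 1
    · subst hβ1
      have e1 : p = x := (hbld.eq_one_iff p x).mp h1
      have e2 : p = x' := (hbld.eq_one_iff p x').mp h3
      rw [← e1, ← e2]
    obtain ⟨i, hdes⟩ := cs.exists_leftDescent_of_ne_one hβ1
    have hlen2 : cs.length (cs.simple i * β) + 1 = cs.length β := by
      have hdes' : cs.length (cs.simple i * β) < cs.length β := hdes
      rcases cs.length_simple_mul β i with h | h <;> omega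
    -- construct the gates y and y'
    obtain ⟨y, hy1, hy2⟩ := hbld.exists_step x p i
    obtain ⟨y', hy1', hy2'⟩ := hbld.exists_step x' p i
    have hyx : δ y x = cs.simple i * β := by
      rw [hbld.symm x y, hy2, hbld.symm p x, h1, mul_inv_rev, cs.inv_simple, inv_inv]
    have hyx' : δ y' x' = cs.simple i * β := by
      rw [hbld.symm x' y', hy2', hbld.symm p x', h3, mul_inv_rev, cs.inv_simple, inv_inv]
    have hyq : δ y q = cs.simple i * (β * γ) := by
      rcases hbld.step q p y i hy1 with h | h
      · rw [hbld.symm q y, h, mul_inv_rev, cs.inv_simple, hbld.symm p q, hpq, inv_inv]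
      · exfalso
        have htri := delta_triangle hbld y x q
        rw [hyx, h2] at htri
        have hyq2 : δ y q = β * γ := by
          rw [hbld.symm q y, h, hbld.symm p q, hpq, inv_inv]
        rw [hyq2] at htri
        omega
    have hyq' : δ y' q = cs.simple i * (β * γ) := by
      rcases hbld.step q p y' i hy1' with h | h
      · rw [hbld.symm q y', h, mul_inv_rev, cs.inv_simple, hbld.symm p q, hpq, inv_inv]
      · exfalso
        have htri := delta_triangle hbld y' x' q
        rw [hyx', h4] at htri
        have hyq2 : δ y' q = β * γ := by
          rw [hbld.symm q y', h, hbld.symm p q, hpq, inv_inv]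
        rw [hyq2] at htri
        omega
    have hlenyq : cs.length (cs.simple i * (β * γ)) + 1 = cs.length (β * γ) := by
      have htri := delta_triangle hbld y x q
      rw [hyx, h2, hyq] at htri
      rcases cs.length_simple_mul (β * γ) i with h | h <;> omega
    have hyy' : y = y' := by
      by_contra hne
      have hyp : δ y p = cs.simple i := by
        rw [hbld.symm p y, hy1, cs.inv_simple]
      rcases hbld.step y p y' i hy1' with h | h
      · rw [hyp, cs.simple_mul_simple_self] at h
        exact hne ((hbld.eq_one_iff y y').mp h)
      · rw [hyp] at h
        have hql : δ q y = (cs.simple i * (β * γ))⁻¹ := by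
          rw [hbld.symm y q, hyq]
        have e1 : δ q y * cs.simple i = (β * γ)⁻¹ := by
          rw [hql, mul_inv_rev, cs.inv_simple, mul_assoc, cs.simple_mul_simple_self, mul_one]
        have hcond : cs.length (δ q y * cs.simple i) = cs.length (δ q y) + 1 := by
          rw [e1, hql, cs.length_inv, cs.length_inv]
          omega
        have hforced := hbld.step_len q y y' i h hcond
        rw [e1] at hforced
        have hyq2 : δ y' q = β * γ := by
          rw [hbld.symm q y', hforced, inv_inv]
        rw [hyq'] at hyq2
        have := congrArg cs.length hyq2
        omega
    refine ih (cs.simple i * β) γ y q x x' (by omega) ?_ ?_ hyx h2 ?_ h4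
    · rw [mul_assoc]
      omega
    · rw [mul_assoc]; exact hyq
    · rw [hyy']; exact hyx'
lemma delta_unique (β γ : W) (p q x x' : Ch)
    (hadd : cs.length β + cs.length γ = cs.length (β * γ)) (hpq : δ p q = β * γ)
    (h1 : δ p x = β) (h2 : δ x q = γ) (h3 : δ p x' = β) (h4 : δ x' q = γ) : x = x' :=
  delta_unique_aux hbld (cs.length β) β γ p q x x' le_rfl hadd hpq h1 h2 h3 h4

end building

section hull

variable {I W Ch : Type*} [Group W] {M : CoxeterMatrix I} {cs : CoxeterSystem M W}
variable {δ : Ch → Ch → W} (hbld : IsWBuilding cs δ)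
variable {w₀ : W} (hw₀ : ∀ w : W, cs.length w ≤ cs.length w₀)

include hbld hw₀

/-- The convex hull of a pair of opposite chambers is an apartment. -/
lemma hull_main {p q : Ch} (hpq : δ p q = w₀) :
    ∃ Xf : W → Ch, (∀ u, δ p (Xf u) = u ∧ δ (Xf u) q = u⁻¹ * w₀) ∧
      Function.Injective Xf ∧ (∀ u v, δ (Xf u) (Xf v) = u⁻¹ * v) := by
  classical
  -- existence of chambers at each position
  have ex : ∀ (n : ℕ) (u : W), cs.length u ≤ n → ∃ z, δ p z = u ∧ δ z q = u⁻¹ * w₀ := by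
    intro n
    induction n with
    | zero =>
      intro u hu
      have h1 : u = 1 := cs.length_eq_zero_iff.mp (Nat.le_zero.mp hu)
      subst h1
      exact ⟨p, delta_self hbld p, by rw [hpq]; group⟩
    | succ n ih =>
      intro u hu
      by_cases hu1 : u = 1
      · subst hu1
        exact ⟨p, delta_self hbld p, by rw [hpq]; group⟩
      obtain ⟨i, hdes⟩ := cs.exists_rightDescent_of_ne_one hu1
      have hdes' : cs.length (u * cs.simple i) < cs.length u := hdes
      have hlen : cs.length (u * cs.simple i) + 1 = cs.length u := by
        rcases cs.length_mul_simple u i with h | h <;> omega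
      obtain ⟨z', hz1, hz2⟩ := ih (u * cs.simple i) (by omega)
      obtain ⟨e, he1, he2⟩ := hbld.exists_step q z' i
      have hqz' : δ q z' = w₀⁻¹ * (u * cs.simple i) := by
        rw [hbld.symm z' q, hz2]
        group
      have heq : δ e q = u⁻¹ * w₀ := by
        rw [hbld.symm q e, he2, hqz']
        calc (w₀⁻¹ * (u * cs.simple i) * cs.simple i)⁻¹
            = (w₀⁻¹ * u * (cs.simple i * cs.simple i))⁻¹ := by group
          _ = (w₀⁻¹ * u)⁻¹ := by rw [cs.simple_mul_simple_self, mul_one]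
          _ = u⁻¹ * w₀ := by group
      have hcond : cs.length (δ p z' * cs.simple i) = cs.length (δ p z') + 1 := by
        rw [hz1, cs.simple_mul_simple_cancel_right]
        omega
      have hpe := hbld.step_len p z' e i he1 hcond
      rw [hz1, cs.simple_mul_simple_cancel_right] at hpe
      exact ⟨e, hpe, heq⟩
  have ex' : ∀ u : W, ∃ z, δ p z = u ∧ δ z q = u⁻¹ * w₀ :=
    fun u => ex (cs.length u) u le_rfl
  set Xf : W → Ch := fun u => Classical.choose (ex' u) with hXf
  have hspec : ∀ u, δ p (Xf u) = u ∧ δ (Xf u) q = u⁻¹ * w₀ :=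
    fun u => Classical.choose_spec (ex' u)
  -- uniqueness of position
  have huniq : ∀ (z : Ch) (u : W), δ p z = u → δ z q = u⁻¹ * w₀ → z = Xf u := by
    intro z u h1 h2
    refine delta_unique hbld u (u⁻¹ * w₀) p q z (Xf u) ?_ ?_ h1 h2 (hspec u).1 (hspec u).2
    · have hc := length_compl cs hw₀ u
      rw [show u * (u⁻¹ * w₀) = w₀ by group]
      exact hc
    · rw [hpq]; group
  -- adjacency, ascending case
  have hadj_up : ∀ (u : W) (i : I), cs.length (u * cs.simple i) = cs.length u + 1 →
      δ (Xf u) (Xf (u * cs.simple i)) = cs.simple i := by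
    intro u i hup
    obtain ⟨e, he1, he2⟩ := hbld.exists_step q (Xf u) i
    have hqx : δ q (Xf u) = w₀⁻¹ * u := by
      rw [hbld.symm (Xf u) q, (hspec u).2]
      group
    have heq : δ e q = (u * cs.simple i)⁻¹ * w₀ := by
      rw [hbld.symm q e, he2, hqx]
      group
    have hcond : cs.length (δ p (Xf u) * cs.simple i) = cs.length (δ p (Xf u)) + 1 := by
      rw [(hspec u).1]
      omega
    have hpe := hbld.step_len p (Xf u) e i he1 hcond
    rw [(hspec u).1] at hpe
    have hexf : e = Xf (u * cs.simple i) := huniq e (u * cs.simple i) hpe heq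
    rw [← hexf]
    exact he1
  have hadj : ∀ (u : W) (i : I), δ (Xf u) (Xf (u * cs.simple i)) = cs.simple i := by
    intro u i
    rcases cs.length_mul_simple u i with h | h
    · exact hadj_up u i h
    · have h2 := hadj_up (u * cs.simple i) i (by rw [cs.simple_mul_simple_cancel_right]; omega)
      rw [cs.simple_mul_simple_cancel_right] at h2
      rw [hbld.symm (Xf (u * cs.simple i)) (Xf u), h2, cs.inv_simple]
  -- full isometry
  have hiso : ∀ (n : ℕ) (u v : W), cs.length (u⁻¹ * v) ≤ n →
      δ (Xf u) (Xf v) = u⁻¹ * v := by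
    intro n
    induction n with
    | zero =>
      intro u v hn
      have h1 : u⁻¹ * v = 1 := cs.length_eq_zero_iff.mp (Nat.le_zero.mp hn)
      have h2 : u = v := inv_mul_eq_one.mp h1
      subst h2
      rw [delta_self hbld, h1]
    | succ n ih =>
      intro u v hn
      by_cases huv : u⁻¹ * v = 1
      · have h2 : u = v := inv_mul_eq_one.mp huv
        subst h2
        rw [delta_self hbld, huv]
      obtain ⟨j, hdes⟩ := cs.exists_leftDescent_of_ne_one huv
      have hdes' : cs.length (cs.simple j * (u⁻¹ * v)) < cs.length (u⁻¹ * v) := hdes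
      have hlen : cs.length (cs.simple j * (u⁻¹ * v)) + 1 = cs.length (u⁻¹ * v) := by
        rcases cs.length_simple_mul (u⁻¹ * v) j with h | h <;> omega
      set u' := u * cs.simple j with hu's
      have hu'v : u'⁻¹ * v = cs.simple j * (u⁻¹ * v) := by
        rw [hu's, mul_inv_rev, cs.inv_simple, mul_assoc]
      have hIH := ih u' v (by rw [hu'v]; omega)
      have hadj' : δ (Xf u') (Xf u) = cs.simple j := by
        have := hadj u' j
        rw [hu's, cs.simple_mul_simple_cancel_right] at this
        rw [hu's]
        exact this
      have hvu' : δ (Xf v) (Xf u') = v⁻¹ * u' := by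
        rw [hbld.symm (Xf u') (Xf v), hIH]
        group
      have hu'j : u' * cs.simple j = u := by rw [hu's, cs.simple_mul_simple_cancel_right]
      have hlvu : cs.length (v⁻¹ * u') = cs.length (u⁻¹ * v) - 1 := by
        have e2 : v⁻¹ * u' = (u'⁻¹ * v)⁻¹ := by group
        rw [e2, cs.length_inv, hu'v]
        omega
      have e1 : v⁻¹ * u' * cs.simple j = v⁻¹ * u := by rw [mul_assoc, hu'j]
      have hcond : cs.length (δ (Xf v) (Xf u') * cs.simple j)
          = cs.length (δ (Xf v) (Xf u')) + 1 := by
        rw [hvu', e1]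
        have e3 : cs.length (v⁻¹ * u) = cs.length (u⁻¹ * v) := by
          rw [show v⁻¹ * u = (u⁻¹ * v)⁻¹ by group, cs.length_inv]
        omega
      have hforced := hbld.step_len (Xf v) (Xf u') (Xf u) j hadj' hcond
      rw [hvu', e1] at hforced
      rw [hbld.symm (Xf v) (Xf u), hforced]
      group
  refine ⟨Xf, hspec, ?_, fun u v => hiso (cs.length (u⁻¹ * v)) u v le_rfl⟩
  intro u v huv
  have h5 := hiso (cs.length (u⁻¹ * v)) u v le_rfl
  rw [huv, delta_self hbld] at h5
  exact inv_mul_eq_one.mp h5.symm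
end hull


section panels

variable {I W Ch : Type*} [Group W] {M : CoxeterMatrix I} {cs : CoxeterSystem M W}
variable {δ : Ch → Ch → W} (hbld : IsWBuilding cs δ)

include hbld

lemma panel_eq_of_adj {p p' : Ch} {i : I} (h : δ p p' = cs.simple i) :
    panelOf cs δ p i = panelOf cs δ p' i := by
  have h' : δ p' p = cs.simple i := by rw [hbld.symm p p', h, cs.inv_simple]
  ext z
  simp only [panelOf, Set.mem_setOf_eq]
  constructor
  · rintro (h1 | h1)
    · right
      rw [← (hbld.eq_one_iff p z).mp h1]
      exact h'
    · rcases hbld.step p' p z i h1 with h2 | h2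
      · left
        rw [h2, h', cs.simple_mul_simple_self]
      · right
        rw [h2, h']
  · rintro (h1 | h1)
    · right
      rw [← (hbld.eq_one_iff p' z).mp h1]
      exact h
    · rcases hbld.step p p' z i h1 with h2 | h2
      · left
        rw [h2, h, cs.simple_mul_simple_self]
      · right
        rw [h2, h]

omit hbld in
lemma panel_image {G : Type*} [Group G] [MulAction G Ch] (hact : IsIsometricAction cs δ G)
    (g : G) (p : Ch) (i : I) :
    (fun z => g • z) '' panelOf cs δ p i = panelOf cs δ (g • p) i := by
  ext z
  constructor
  · rintro ⟨w, hw, rfl⟩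
    simp only [panelOf, Set.mem_setOf_eq] at *
    rw [hact g p w]
    exact hw
  · intro hz
    refine ⟨g⁻¹ • z, ?_, by simp⟩
    simp only [panelOf, Set.mem_setOf_eq] at *
    have e := hact g p (g⁻¹ • z)
    rw [smul_inv_smul] at e
    rw [← e]
    exact hz

end panels

end Stmt4Proof

open Stmt4Proof

/-- generation lemma: Let `G` act strongly transitively on a thick
spherical building, `A` an apartment, `c ∈ A` a chamber, `B = Stab_G(c)`, `T` the
pointwise stabilizer of `A`, and for each pair `(P,Q)` of opposite panels of `A`, the
subgroup of `B` stabilizing both `P` and `Q`. Then `B` is generated by `T` together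
with these subgroups. -/
theorem stmt4 {I W Ch G : Type*} [Group W] [Finite W] {M : CoxeterMatrix I}
    (cs : CoxeterSystem M W) (δ : Ch → Ch → W) (hbld : IsWBuilding cs δ)
    (w₀ : W) (hw₀ : ∀ w : W, cs.length w ≤ cs.length w₀)
    (hthick : IsThick cs δ)
    [Group G] [MulAction G Ch] (hact : IsIsometricAction cs δ G)
    (hstrong : IsStronglyTransitive cs δ G)
    (A : Set Ch) (hA : IsApartmentOf cs δ A) (c : Ch) (hc : c ∈ A) :
    ∀ b : G, b • c = c →
      b ∈ Subgroup.closure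
        ({g : G | ∀ x ∈ A, g • x = x} ∪
         {g : G | g • c = c ∧ ∃ P Q : Set Ch, OppPanelsIn cs δ w₀ A P Q ∧
            (fun x => g • x) '' P = P ∧ (fun x => g • x) '' Q = Q}) := by
  classical
  obtain ⟨f₀, hf₀inj, hf₀range, hf₀iso⟩ := hA
  have hc' : c ∈ Set.range f₀ := by rw [hf₀range]; exact hc
  obtain ⟨u₀, hu₀⟩ := hc'
  set f : W → Ch := fun w => f₀ (u₀ * w) with hfs
  have hfiso : ∀ u v : W, δ (f u) (f v) = u⁻¹ * v := by
    intro u v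
    show δ (f₀ (u₀ * u)) (f₀ (u₀ * v)) = u⁻¹ * v
    rw [hf₀iso]
    group
  have hfc : f 1 = c := by show f₀ (u₀ * 1) = c; rw [mul_one, hu₀]
  have hfmem : ∀ w, f w ∈ A := by
    intro w; rw [← hf₀range]; exact ⟨u₀ * w, rfl⟩
  have hfsurj : ∀ x ∈ A, ∃ w, f w = x := by
    intro x hx
    rw [← hf₀range] at hx
    obtain ⟨a, ha⟩ := hx
    exact ⟨u₀⁻¹ * a, by show f₀ (u₀ * (u₀⁻¹ * a)) = x; rw [mul_inv_cancel_left]; exact ha⟩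
  have huniqA : ∀ (w w' : W) (x : Ch), x ∈ A → δ (f w) x = w⁻¹ * w' → x = f w' := by
    intro w w' x hx hd
    obtain ⟨w'', rfl⟩ := hfsurj x hx
    rw [hfiso] at hd
    exact congrArg f (mul_left_cancel hd)
  have hAfin : A.Finite := by rw [← hf₀range]; exact Set.finite_range f₀
  set SS := ({g : G | ∀ x ∈ A, g • x = x} ∪
      {g : G | g • c = c ∧ ∃ P Q : Set Ch, OppPanelsIn cs δ w₀ A P Q ∧
        (fun x => g • x) '' P = P ∧ (fun x => g • x) '' Q = Q}) with hSS
  have base : ∀ b : G, b • c = c → A ⊆ (fun x => b • x) '' A → b ∈ Subgroup.closure SS := by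
    intro b hb hsubA
    have him : (fun x => b • x) '' A = A := by
      refine (Set.eq_of_subset_of_ncard_le hsubA ?_ ?_).symm
      · exact le_of_eq (Set.ncard_image_of_injective A (MulAction.injective b))
      · exact hAfin.image _
    apply Subgroup.subset_closure
    left
    intro x hx
    have hbx : b • x ∈ A := by rw [← him]; exact ⟨x, hx, rfl⟩
    obtain ⟨w, rfl⟩ := hfsurj x hx
    have hdist : δ c (b • f w) = δ c (f w) := by
      have e := hact b c (f w)
      rw [hb] at e
      exact e
    have hdist2 : δ (f 1) (b • f w) = 1⁻¹ * w := by
      rw [hfc, hdist, ← hfc, hfiso]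
    exact huniqA 1 w (b • f w) hbx hdist2
  suffices H : ∀ (n : ℕ) (b : G), b • c = c →
      Set.ncard {w : W | f w ∉ (fun x => b • x) '' A} ≤ n → b ∈ Subgroup.closure SS by
    intro b hb
    exact H _ b hb le_rfl
  intro n
  induction n with
  | zero =>
    intro b hb hcard
    apply base b hb
    intro x hx
    obtain ⟨w, rfl⟩ := hfsurj x hx
    by_contra hout
    have hmem : w ∈ {w : W | f w ∉ (fun x => b • x) '' A} := hout
    have hzero : {w : W | f w ∉ (fun x => b • x) '' A}.ncard = 0 :=
      le_antisymm hcard (Nat.zero_le _)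
    rw [Set.ncard_eq_zero (Set.toFinite _)] at hzero
    rw [hzero] at hmem
    exact hmem
  | succ n ih =>
    intro b hb hcard
    by_cases hfull : ∀ w : W, f w ∈ (fun x => b • x) '' A
    · apply base b hb
      intro x hx
      obtain ⟨w, rfl⟩ := hfsurj x hx
      exact hfull w
    push_neg at hfull
    obtain ⟨uout, huout⟩ := hfull
    have h1V : f 1 ∈ (fun x => b • x) '' A := by rw [hfc]; exact ⟨c, hc, hb⟩
    -- convexity of the coordinate set of A ∩ bA
    have hconv : ∀ w₁ w₂ u : W, f w₁ ∈ (fun x => b • x) '' A →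
        f w₂ ∈ (fun x => b • x) '' A →
        cs.length (w₁⁻¹ * u) + cs.length (u⁻¹ * w₂) = cs.length (w₁⁻¹ * w₂) →
        f u ∈ (fun x => b • x) '' A := by
      intro w₁ w₂ u h1 h2 hadd
      obtain ⟨z₁, hz₁A, hz₁⟩ := h1
      obtain ⟨z₂, hz₂A, hz₂⟩ := h2
      obtain ⟨a₁, rfl⟩ := hfsurj z₁ hz₁A
      obtain ⟨a₂, rfl⟩ := hfsurj z₂ hz₂A
      simp only at hz₁ hz₂
      have haa : w₁⁻¹ * w₂ = a₁⁻¹ * a₂ := by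
        have e := hact b (f a₁) (f a₂)
        rw [hz₁, hz₂, hfiso, hfiso] at e
        exact e
      have hd1 : δ (f w₁) (b • f (a₁ * (w₁⁻¹ * u))) = w₁⁻¹ * u := by
        rw [← hz₁, hact b (f a₁) (f (a₁ * (w₁⁻¹ * u))), hfiso]
        group
      have hd2 : δ (b • f (a₁ * (w₁⁻¹ * u))) (f w₂) = u⁻¹ * w₂ := by
        rw [← hz₂, hact b _ (f a₂), hfiso]
        calc (a₁ * (w₁⁻¹ * u))⁻¹ * a₂ = (w₁⁻¹ * u)⁻¹ * (a₁⁻¹ * a₂) := by group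
          _ = (w₁⁻¹ * u)⁻¹ * (w₁⁻¹ * w₂) := by rw [haa]
          _ = u⁻¹ * w₂ := by group
      have e0 : δ (f w₁) (f w₂) = (w₁⁻¹ * u) * (u⁻¹ * w₂) := by rw [hfiso]; group
      have e1 : cs.length (w₁⁻¹ * u) + cs.length (u⁻¹ * w₂)
          = cs.length ((w₁⁻¹ * u) * (u⁻¹ * w₂)) := by
        rw [show (w₁⁻¹ * u) * (u⁻¹ * w₂) = w₁⁻¹ * w₂ by group]
        exact hadd
      have hfin := delta_unique hbld (w₁⁻¹ * u) (u⁻¹ * w₂) (f w₁) (f w₂) (f u)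
        (b • f (a₁ * (w₁⁻¹ * u))) e1 e0 (by rw [hfiso]) (by rw [hfiso]) hd1 hd2
      rw [hfin]
      exact ⟨f (a₁ * (w₁⁻¹ * u)), hfmem _, rfl⟩
    -- find a boundary pair
    have hbdry : ∀ (m : ℕ) (u : W), cs.length u ≤ m → f u ∉ (fun x => b • x) '' A →
        ∃ v i, f v ∈ (fun x => b • x) '' A ∧ f (v * cs.simple i) ∉ (fun x => b • x) '' A := by
      intro m
      induction m with
      | zero =>
        intro u hu hout
        have hu1 : u = 1 := cs.length_eq_zero_iff.mp (Nat.le_zero.mp hu)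
        rw [hu1] at hout
        exact absurd h1V hout
      | succ m ihm =>
        intro u hu hout
        by_cases hu1 : u = 1
        · rw [hu1] at hout; exact absurd h1V hout
        obtain ⟨i, hdes⟩ := cs.exists_rightDescent_of_ne_one hu1
        have hdes' : cs.length (u * cs.simple i) < cs.length u := hdes
        by_cases hin : f (u * cs.simple i) ∈ (fun x => b • x) '' A
        · exact ⟨u * cs.simple i, i, hin, by rwa [cs.simple_mul_simple_cancel_right]⟩
        · exact ihm (u * cs.simple i) (by omega) hin
    obtain ⟨v, i, hvin, hvout⟩ := hbdry (cs.length uout) uout le_rfl huout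
    -- all of A ∩ bA is on one side of the wall of t = v s_i v⁻¹
    have claimA : ∀ w : W, f w ∈ (fun x => b • x) '' A →
        cinv cs w (v * cs.simple i * v⁻¹) = cinv cs v (v * cs.simple i * v⁻¹) := by
      intro w hw
      by_contra hne
      have hsum : cinv cs w (v * cs.simple i * v⁻¹) + cinv cs v (v * cs.simple i * v⁻¹) = 1 :=
        zmod2_sum_eq_one_of_ne hne
      have hlt := (sep_iff cs v w i).mpr hsum
      have hlen1 : cs.length ((w⁻¹ * v) * cs.simple i) + 1 = cs.length (w⁻¹ * v) := by
        rcases cs.length_mul_simple (w⁻¹ * v) i with h | h <;> omega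
      apply hvout
      apply hconv w v (v * cs.simple i) hw hvin
      have e1 : w⁻¹ * (v * cs.simple i) = (w⁻¹ * v) * cs.simple i := by rw [mul_assoc]
      have e2 : (v * cs.simple i)⁻¹ * v = cs.simple i := by
        rw [mul_inv_rev, cs.inv_simple, mul_assoc, inv_mul_cancel, mul_one]
      rw [e1, e2, cs.length_simple]
      omega
    have hK1cond : ∀ w : W, f w ∈ (fun x => b • x) '' A →
        cs.length ((w⁻¹ * v) * cs.simple i) = cs.length (w⁻¹ * v) + 1 := by
      intro w hw
      have hsum0 : cinv cs w (v * cs.simple i * v⁻¹) + cinv cs v (v * cs.simple i * v⁻¹) = 0 := by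
        rw [claimA w hw, zmod2_add_self]
      have hnlt : ¬ cs.length ((w⁻¹ * v) * cs.simple i) < cs.length (w⁻¹ * v) := by
        intro hlt
        have h1 := (sep_iff cs v w i).mp hlt
        have h01 : (0 : ZMod 2) = 1 := hsum0.symm.trans h1
        exact absurd h01 (by decide)
      rcases cs.length_mul_simple (w⁻¹ * v) i with h | h
      · exact h
      · exact absurd (by omega) hnlt
    -- coordinates of x = f v inside bA, and the chamber y'
    have hvinc := hvin
    obtain ⟨za, hzaA, hza⟩ := hvinc
    obtain ⟨a, rfl⟩ := hfsurj za hzaA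
    simp only at hza
    set y' := b • f (a * cs.simple i) with hy's
    have hxy' : δ (f v) y' = cs.simple i := by
      rw [← hza, hy's, hact b (f a) (f (a * cs.simple i)), hfiso]
      group
    have hy'bA : y' ∈ (fun x => b • x) '' A := ⟨f (a * cs.simple i), hfmem _, rfl⟩
    have K1 : ∀ w : W, f w ∈ (fun x => b • x) '' A →
        δ (f w) y' = (w⁻¹ * v) * cs.simple i := by
      intro w hw
      have hcond : cs.length (δ (f w) (f v) * cs.simple i) = cs.length (δ (f w) (f v)) + 1 := by
        rw [hfiso]
        exact hK1cond w hw
      have hres := hbld.step_len (f w) (f v) y' i hxy' hcond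
      rw [hfiso] at hres
      exact hres
    have hl1 : 1 ≤ cs.length w₀ := by
      have h2 := cs.length_simple i
      have h3 := hw₀ (cs.simple i)
      omega
    -- K2 : δ y' (f (v * s i * w₀)) = w₀
    have hK2 : δ (f (v * cs.simple i * w₀)) y' = w₀ := by
      have hyx : δ (f (v * cs.simple i * w₀)) (f v) = w₀ * cs.simple i := by
        rw [hfiso]
        calc (v * cs.simple i * w₀)⁻¹ * v = w₀⁻¹ * (cs.simple i)⁻¹ := by group
          _ = w₀ * cs.simple i := by rw [cs.inv_simple, w0_inv cs hw₀]
      have hcond : cs.length (δ (f (v * cs.simple i * w₀)) (f v) * cs.simple i)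
          = cs.length (δ (f (v * cs.simple i * w₀)) (f v)) + 1 := by
        rw [hyx, cs.simple_mul_simple_cancel_right]
        have h2 := length_w0_mul cs hw₀ (cs.simple i)
        rw [cs.length_simple] at h2
        omega
      have hres := hbld.step_len (f (v * cs.simple i * w₀)) (f v) y' i hxy' hcond
      rw [hyx, cs.simple_mul_simple_cancel_right] at hres
      exact hres
    have hy'ystar : δ y' (f (v * cs.simple i * w₀)) = w₀ := by
      rw [hbld.symm (f (v * cs.simple i * w₀)) y', hK2, w0_inv cs hw₀]
    -- the folded apartment
    obtain ⟨Xf, hXspec, hXinj, hXiso⟩ := hull_main hbld hw₀ hy'ystar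
    have hA2 : IsApartmentOf cs δ (Set.range Xf) := ⟨Xf, hXinj, rfl, hXiso⟩
    have huniqX : ∀ (z : Ch) (u : W), δ y' z = u →
        δ z (f (v * cs.simple i * w₀)) = u⁻¹ * w₀ → z = Xf u := by
      intro z u h1 h2
      refine delta_unique hbld u (u⁻¹ * w₀) y' (f (v * cs.simple i * w₀)) z (Xf u) ?_ ?_
        h1 h2 (hXspec u).1 (hXspec u).2
      · have hcl := length_compl cs hw₀ u
        rw [show u * (u⁻¹ * w₀) = w₀ by group]
        exact hcl
      · rw [hy'ystar]
        group
    have K3 : ∀ w : W, f w ∈ (fun x => b • x) '' A →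
        f w = Xf ((w⁻¹ * v * cs.simple i)⁻¹) := by
      intro w hw
      apply huniqX
      · rw [hbld.symm (f w) y', K1 w hw, mul_assoc]
      · rw [hfiso, inv_inv]
        group
    have hxA2 : f v ∈ Set.range Xf := ⟨_, (K3 v hvin).symm⟩
    have hy'A2 : y' ∈ Set.range Xf := by
      refine ⟨1, (huniqX y' 1 (delta_self hbld y') ?_).symm⟩
      rw [hy'ystar]
      group
    have hystarA2 : f (v * cs.simple i * w₀) ∈ Set.range Xf := by
      refine ⟨w₀, (huniqX _ w₀ hy'ystar ?_).symm⟩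
      rw [delta_self hbld]
      group
    obtain ⟨h, himg, hhx⟩ := hstrong (Set.range Xf) A hA2 ⟨f₀, hf₀inj, hf₀range, hf₀iso⟩
      (f v) hxA2 (f v) (hfmem v)
    have hpin : ∀ z, z ∈ Set.range Xf → z ∈ A → h • z = z := by
      intro z hz2 hzA
      have hhzA : h • z ∈ A := by rw [← himg]; exact ⟨z, hz2, rfl⟩
      obtain ⟨w₁, rfl⟩ := hfsurj z hzA
      have hdist : δ (f v) (h • f w₁) = v⁻¹ * w₁ := by
        have e := hact h (f v) (f w₁)
        rw [hhx, hfiso] at e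
        exact e
      exact huniqA v w₁ (h • f w₁) hhzA hdist
    have hhc : h • c = c := by
      have hpc := hpin (f 1) ⟨_, (K3 1 h1V).symm⟩ (hfmem 1)
      rw [hfc] at hpc
      exact hpc
    have hhy' : h • y' = f (v * cs.simple i) := by
      have hy'A : h • y' ∈ A := by rw [← himg]; exact ⟨y', hy'A2, rfl⟩
      have hdist : δ (f v) (h • y') = v⁻¹ * (v * cs.simple i) := by
        calc δ (f v) (h • y') = δ (h • f v) (h • y') := by rw [hhx]
          _ = δ (f v) y' := hact h (f v) y'
          _ = cs.simple i := hxy'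
          _ = v⁻¹ * (v * cs.simple i) := by group
      exact huniqA v (v * cs.simple i) (h • y') hy'A hdist
    obtain ⟨istar, histar⟩ := exists_istar cs hw₀ i
    have hdxy : δ (f (v * w₀)) (f (v * cs.simple i * w₀)) = cs.simple istar := by
      rw [hfiso]
      calc (v * w₀)⁻¹ * (v * cs.simple i * w₀) = w₀⁻¹ * cs.simple i * w₀ := by group
        _ = w₀ * cs.simple i * w₀ := by rw [w0_inv cs hw₀]
        _ = cs.simple istar := histar
    have hQeq := panel_eq_of_adj hbld hdxy
    have hhystar : h • f (v * cs.simple i * w₀) = f (v * cs.simple i * w₀) :=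
      hpin _ hystarA2 (hfmem _)
    have hgen : h ∈ SS := by
      right
      refine ⟨hhc, panelOf cs δ (f v) i, panelOf cs δ (f (v * w₀)) istar, ?_, ?_, ?_⟩
      · refine ⟨⟨f v, i, rfl⟩, ⟨f (v * w₀), istar, rfl⟩, f v, ⟨?_, hfmem v⟩,
          f (v * w₀), ⟨?_, hfmem _⟩, ?_⟩
        · exact Or.inl (delta_self hbld (f v))
        · exact Or.inl (delta_self hbld (f (v * w₀)))
        · rw [hfiso]; group
      · rw [panel_image hact h (f v) i, hhx]
      · rw [hQeq, panel_image hact h (f (v * cs.simple i * w₀)) istar, hhystar]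
    have hsub : ∀ w : W, f w ∈ (fun x => b • x) '' A →
        f w ∈ (fun x => (h * b) • x) '' A := by
      intro w hw
      have hwc := hw
      obtain ⟨z, hzA, hz⟩ := hwc
      refine ⟨z, hzA, ?_⟩
      show (h * b) • z = f w
      simp only at hz
      rw [mul_smul, hz]
      exact hpin (f w) ⟨_, (K3 w hw).symm⟩ (hfmem w)
    have hnew : f (v * cs.simple i) ∈ (fun x => (h * b) • x) '' A := by
      refine ⟨f (a * cs.simple i), hfmem _, ?_⟩
      show (h * b) • f (a * cs.simple i) = f (v * cs.simple i)
      rw [mul_smul, ← hy's]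
      exact hhy'
    have hss : {w : W | f w ∉ (fun x => (h * b) • x) '' A}
        ⊂ {w : W | f w ∉ (fun x => b • x) '' A} := by
      rw [Set.ssubset_def]
      constructor
      · intro w hw
        simp only [Set.mem_setOf_eq] at *
        intro hmem
        exact hw (hsub w hmem)
      · intro hcontra
        have h2 := hcontra (show v * cs.simple i ∈ {w : W | f w ∉ (fun x => b • x) '' A}
          from hvout)
        exact h2 hnew
    have hlt := Set.ncard_lt_ncard hss (Set.toFinite _)
    have hhbc : (h * b) • c = c := by rw [mul_smul, hb, hhc]
    have hhb := ih (h * b) hhbc (by omega)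
    have hfinal : b = h⁻¹ * (h * b) := (inv_mul_cancel_left h b).symm
    rw [hfinal]
    exact Subgroup.mul_mem _ (Subgroup.inv_mem _ (Subgroup.subset_closure hgen)) hhb
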